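/- Product of convolutions: Let A be a compact Hausdorff second-countable abelian group with normalized Haar probability measure μ, let k ≥ 1 and ε > 0, and let F = (f_v)_{v ∈ K_k} and G = (g_v)_{v ∈ K_k} be two systems of Borel measurable functions on A with ‖f_v‖_∞ ≤ 1 and ‖g_v‖_∞ ≤ 1 for all v. Then there exist a natural number n ≤ (1 + 64/ε²)² and function systems H¹,…,Hⁿ, each Hⁱ = (h_vⁱ)_{v ∈ K_k} with ‖h_vⁱ‖_∞ ≤ 1, such that ‖[F]·[G] − (1/n)·∑_{i=1}^n [Hⁱ]‖_{L²(μ)} ≤ ε. -/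

import Mathlib

open MeasureTheory
open scoped BigOperators
open ComplexConjugate
open scoped ENNReal

/-- The `⋆` operation: conjugate a complex number iff the natural number parameter is odd. -/
noncomputable def cstar (m : ℕ) (z : ℂ) : ℂ := if Even m then z else (starRingEnd ℂ) z

/-- The height `h(v)` of a cube vertex `v ∈ {0,1}^k`: the number of `1` coordinates. -/
def ht {k : ℕ} (v : Fin k → Bool) : ℕ := (Finset.univ.filter (fun i => v i = true)).card

/-- The point `x + v₁t₁ + ⋯ + v_k t_k` of the cube with base `x` and edges `t`. -/
def vertexPoint {A : Type*} [AddCommGroup A] {k : ℕ} (x : A) (t : Fin k → A)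
    (v : Fin k → Bool) : A := x + ∑ i, if v i then t i else 0

/-- The Gowers integral
`G_k(f) = ∫_{A^{k+1}} ∏_{v ∈ {0,1}^k} C^{h(v)} f(x + v₁t₁ + ⋯ + v_k t_k) dμ(x)dμ(t₁)⋯dμ(t_k)`,
so that `‖f‖_{U_k}^{2^k} = G_k(f)`. -/
noncomputable def gowersIntegral {A : Type*} [AddCommGroup A] [MeasurableSpace A]
    (μ : Measure A) (k : ℕ) (f : A → ℂ) : ℂ :=
  ∫ x, ∫ t : Fin k → A, ∏ v : Fin k → Bool, cstar (ht v) (f (vertexPoint x t v))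
    ∂(Measure.pi fun _ => μ) ∂μ


/-- The corner convolution `[F]` of a system `F = (f_v)_{v ∈ K_n}` of functions on `A`. -/
noncomputable def cornerConv {A : Type*} [AddCommGroup A] [MeasurableSpace A]
    (μ : Measure A) (n : ℕ) (F : (Fin n → Bool) → A → ℂ) (x : A) : ℂ :=
  ∫ t : Fin n → A,
    ∏ v ∈ Finset.univ.filter (fun v : Fin n → Bool => v ≠ fun _ => false),
      cstar (ht v) (F v (vertexPoint x t v))
    ∂(Measure.pi fun _ => μ)

lemma cstar_norm (m : ℕ) (z : ℂ) : ‖cstar m z‖ = ‖z‖ := by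
  unfold cstar; split <;> simp

lemma cstar_mul (m : ℕ) (a b : ℂ) : cstar m (a * b) = cstar m a * cstar m b := by
  unfold cstar; split <;> simp

lemma measurable_cstar (m : ℕ) : Measurable (cstar m) := by
  unfold cstar; split
  · exact measurable_id
  · exact continuous_star.measurable

lemma integrable_of_bound {X : Type*} [MeasurableSpace X] (μ : Measure X) [IsFiniteMeasure μ]
    {E : Type*} [NormedAddCommGroup E] {f : X → E} (hm : AEStronglyMeasurable f μ) (C : ℝ)
    (h : ∀ x, ‖f x‖ ≤ C) : Integrable f μ :=
  (integrable_const C).mono' hm (Filter.Eventually.of_forall h)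

section
variable {A : Type*} [AddCommGroup A] [MeasurableSpace A] [MeasurableAdd₂ A] {k : ℕ}

lemma measurable_sumIf (v : Fin k → Bool) :
    Measurable (fun t : Fin k → A => ∑ i, if v i then t i else 0) :=
  Finset.measurable_sum _ fun i _ => by
    by_cases h : v i
    · simpa [h] using measurable_pi_apply i
    · simpa [h] using measurable_const

lemma measurable_vertexPoint_comp {B : Type*} [MeasurableSpace B] {x : B → A}
    {t : B → Fin k → A} (hx : Measurable x) (htm : Measurable t) (v : Fin k → Bool) :
    Measurable (fun b => vertexPoint (x b) (t b) v) := by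
  unfold vertexPoint
  exact hx.add ((measurable_sumIf v).comp htm)

lemma vertexPoint_add (x : A) (t u : Fin k → A) (v : Fin k → Bool) :
    vertexPoint x (t + u) v = vertexPoint x t v + ∑ i, if v i then u i else 0 := by
  unfold vertexPoint
  rw [add_assoc, ← Finset.sum_add_distrib]
  congr 1
  refine Finset.sum_congr rfl fun i _ => ?_
  by_cases h : v i <;> simp [h]

end


noncomputable def shiftSys {A : Type*} [AddCommGroup A] {k : ℕ}
    (F G : (Fin k → Bool) → A → ℂ) (u : Fin k → A) (v : Fin k → Bool) (y : A) : ℂ :=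
  F v y * G v (y + ∑ i, if v i then u i else 0)

section
variable {A : Type*} [AddCommGroup A] [MeasurableSpace A] [MeasurableAdd₂ A] {k : ℕ}

omit [MeasurableAdd₂ A] in
lemma norm_cornerProd_le (F : (Fin k → Bool) → A → ℂ) (hFbd : ∀ v x, ‖F v x‖ ≤ 1)
    (x : A) (t : Fin k → A) (S : Finset (Fin k → Bool)) :
    ‖∏ v ∈ S, cstar (ht v) (F v (vertexPoint x t v))‖ ≤ 1 := by
  rw [norm_prod]
  exact Finset.prod_le_one (fun v _ => norm_nonneg _)
    (fun v _ => by rw [cstar_norm]; exact hFbd v _)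

lemma measurable_cornerProd {B : Type*} [MeasurableSpace B]
    (F : (Fin k → Bool) → A → ℂ) (hF : ∀ v, Measurable (F v)) {x : B → A}
    {t : B → Fin k → A} (hx : Measurable x) (htm : Measurable t)
    (S : Finset (Fin k → Bool)) :
    Measurable (fun b => ∏ v ∈ S, cstar (ht v) (F v (vertexPoint (x b) (t b) v))) :=
  Finset.measurable_prod _ fun v _ =>
    (measurable_cstar _).comp ((hF v).comp (measurable_vertexPoint_comp hx htm v))

lemma measurable_cornerConv (μ : Measure A) [IsProbabilityMeasure μ]
    (F : (Fin k → Bool) → A → ℂ) (hF : ∀ v, Measurable (F v)) :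
    Measurable (cornerConv μ k F) := by
  have h : StronglyMeasurable fun p : A × (Fin k → A) =>
      ∏ v ∈ Finset.univ.filter (fun v : Fin k → Bool => v ≠ fun _ => false),
        cstar (ht v) (F v (vertexPoint p.1 p.2 v)) :=
    (measurable_cornerProd F hF measurable_fst measurable_snd _).stronglyMeasurable
  exact h.integral_prod_right'.measurable

omit [MeasurableAdd₂ A] in
lemma norm_cornerConv_le (μ : Measure A) [IsProbabilityMeasure μ]
    (F : (Fin k → Bool) → A → ℂ) (hFbd : ∀ v x, ‖F v x‖ ≤ 1) (x : A) :
    ‖cornerConv μ k F x‖ ≤ 1 := by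
  have := norm_integral_le_of_norm_le_const (μ := Measure.pi fun _ : Fin k => μ) (C := 1)
    (f := fun t => ∏ v ∈ Finset.univ.filter (fun v : Fin k → Bool => v ≠ fun _ => false),
      cstar (ht v) (F v (vertexPoint x t v)))
    (Filter.Eventually.of_forall fun t => norm_cornerProd_le F hFbd x t _)
  simpa [cornerConv] using this

end

section
variable {A : Type*} [AddCommGroup A] [MeasurableSpace A] [MeasurableAdd₂ A] {k : ℕ}

lemma cornerConv_mul_eq (μ : Measure A) [IsProbabilityMeasure μ] [μ.IsAddLeftInvariant]
    (F G : (Fin k → Bool) → A → ℂ)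
    (hFm : ∀ v, Measurable (F v)) (hFbd : ∀ v x, ‖F v x‖ ≤ 1)
    (hGm : ∀ v, Measurable (G v)) (hGbd : ∀ v x, ‖G v x‖ ≤ 1) (x : A) :
    cornerConv μ k F x * cornerConv μ k G x
      = ∫ u, cornerConv μ k (shiftSys F G u) x ∂(Measure.pi fun _ : Fin k => μ) := by
  set S : Finset (Fin k → Bool) :=
    Finset.univ.filter (fun v : Fin k → Bool => v ≠ fun _ => false) with hS
  set ν : Measure (Fin k → A) := Measure.pi fun _ : Fin k => μ with hν
  have hP : ∀ (H : (Fin k → Bool) → A → ℂ), cornerConv μ k H x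
      = ∫ t, ∏ v ∈ S, cstar (ht v) (H v (vertexPoint x t v)) ∂ν := fun H => rfl
  set P : (Fin k → A) → ℂ := fun t => ∏ v ∈ S, cstar (ht v) (F v (vertexPoint x t v)) with hPdef
  set Q : (Fin k → A) → ℂ := fun s => ∏ v ∈ S, cstar (ht v) (G v (vertexPoint x s v)) with hQdef
  have hPb : ∀ t, ‖P t‖ ≤ 1 := fun t => norm_cornerProd_le F hFbd x t S
  have hQb : ∀ s, ‖Q s‖ ≤ 1 := fun s => norm_cornerProd_le G hGbd x s S
  have hkey : ∀ (t u : Fin k → A), P t * Q (t + u)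
      = ∏ v ∈ S, cstar (ht v) (shiftSys F G u v (vertexPoint x t v)) := by
    intro t u
    rw [hPdef, hQdef]
    rw [← Finset.prod_mul_distrib]
    exact Finset.prod_congr rfl fun v _ => by
      rw [← cstar_mul, shiftSys, vertexPoint_add]
  have hInt : Integrable (Function.uncurry fun t u : Fin k → A => P t * Q (t + u))
      (ν.prod ν) := by
    have haddm : Measurable fun p : (Fin k → A) × (Fin k → A) => p.1 + p.2 :=
      measurable_pi_lambda _ fun i =>
        ((measurable_pi_apply i).comp measurable_fst).add
          ((measurable_pi_apply i).comp measurable_snd)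
    have hm : Measurable (Function.uncurry fun t u : Fin k → A => P t * Q (t + u)) := by
      refine Measurable.mul ?_ ?_
      · exact (measurable_cornerProd F hFm measurable_const measurable_fst S)
      · exact (measurable_cornerProd G hGm measurable_const haddm S)
    refine integrable_of_bound _ hm.aestronglyMeasurable 1 fun p => ?_
    have h8 : ‖P p.1‖ * ‖Q (p.1 + p.2)‖ ≤ 1 * 1 :=
      mul_le_mul (hPb _) (hQb _) (norm_nonneg _) zero_le_one
    rw [Function.uncurry]
    rw [norm_mul]
    linarith
  calc cornerConv μ k F x * cornerConv μ k G x
      = ∫ t, P t * ∫ s, Q s ∂ν ∂ν := (integral_mul_const _ _).symm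
    _ = ∫ t, ∫ u, P t * Q (t + u) ∂ν ∂ν := by
        refine integral_congr_ae (Filter.Eventually.of_forall fun t => ?_)
        have h1 : ∫ s, Q s ∂ν = ∫ u, Q (t + u) ∂ν := (integral_add_left_eq_self Q t).symm
        calc P t * ∫ s, Q s ∂ν = P t * ∫ u, Q (t + u) ∂ν := by rw [h1]
          _ = ∫ u, P t * Q (t + u) ∂ν := (integral_const_mul (P t) fun u => Q (t + u)).symm
    _ = ∫ u, ∫ t, P t * Q (t + u) ∂ν ∂ν := integral_integral_swap hInt
    _ = ∫ u, cornerConv μ k (shiftSys F G u) x ∂ν := by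
        refine integral_congr_ae (Filter.Eventually.of_forall fun u => ?_)
        show ∫ t, P t * Q (t + u) ∂ν = cornerConv μ k (shiftSys F G u) x
        rw [hP (shiftSys F G u)]
        exact integral_congr_ae (Filter.Eventually.of_forall fun t => hkey t u)

end

section sampling
variable {U : Type*} [MeasureSpace U] [IsProbabilityMeasure (volume : Measure U)]

lemma cross_term (d : U → ℂ) (hd : Measurable d) (hdb : ∀ u, ‖d u‖ ≤ 2)
    (hd0 : (∫ u, d u) = 0) (n : ℕ) (i j : Fin n) :
    (∫ w : Fin n → U, d (w i) * conj (d (w j)))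
      = if i = j then ∫ u, d u * conj (d u) else 0 := by
  have hprod := MeasureTheory.integral_fintype_prod_volume_eq_prod (𝕜 := ℂ) (ι := Fin n)
    (fun m (u : U) => (if m = i then d u else 1) * (if m = j then conj (d u) else 1))
  have hL : ∀ w : Fin n → U,
      (∏ m, (if m = i then d (w m) else 1) * (if m = j then conj (d (w m)) else 1))
        = d (w i) * conj (d (w j)) := by
    intro w
    rw [Finset.prod_mul_distrib, Finset.prod_ite_eq' Finset.univ i (fun m => d (w m)),
      Finset.prod_ite_eq' Finset.univ j (fun m => conj (d (w m)))]
    simp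
  simp_rw [hL] at hprod
  rw [hprod]
  by_cases hij : i = j
  · subst hij
    rw [if_pos rfl]
    rw [Finset.prod_eq_single i (fun m _ hmi => by simp [hmi]) (by simp)]
    simp
  · rw [if_neg hij]
    refine Finset.prod_eq_zero (Finset.mem_univ i) ?_
    have : (fun u => (if i = i then d u else 1) * (if i = j then conj (d u) else 1))
        = fun u => d u := by funext u; simp [hij]
    rw [this, hd0]

lemma variance_bound (d : U → ℂ) (hd : Measurable d) (hdb : ∀ u, ‖d u‖ ≤ 2)
    (hd0 : (∫ u, d u) = 0) (n : ℕ) :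
    (∫ w : Fin n → U, ‖∑ i, d (w i)‖ ^ 2) = n * ∫ u, ‖d u‖ ^ 2 := by
  have hz : ∀ z : ℂ, (z * conj z).re = ‖z‖ ^ 2 := fun z => by
    rw [Complex.mul_conj]
    simp [Complex.normSq_eq_norm_sq, ← Complex.ofReal_pow]
  have hintterm : ∀ i j : Fin n,
      Integrable (fun w : Fin n → U => d (w i) * conj (d (w j))) volume := by
    intro i j
    have hm : Measurable fun w : Fin n → U => d (w i) * conj (d (w j)) :=
      ((hd.comp (measurable_pi_apply i))).mul
        (continuous_star.measurable.comp (hd.comp (measurable_pi_apply j)))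
    refine integrable_of_bound _ hm.aestronglyMeasurable 4 fun w => ?_
    rw [norm_mul, RCLike.norm_conj]
    have h7 : ‖d (w i)‖ * ‖d (w j)‖ ≤ 2 * 2 :=
      mul_le_mul (hdb _) (hdb _) (norm_nonneg _) (by norm_num)
    linarith
  have expand : (∫ w : Fin n → U, (∑ i, d (w i)) * conj (∑ j, d (w j)))
      = (n : ℂ) * ∫ u, d u * conj (d u) := by
    have hsum : ∀ w : Fin n → U,
        (∑ i, d (w i)) * conj (∑ j, d (w j)) = ∑ i, ∑ j, d (w i) * conj (d (w j)) := by
      intro w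
      rw [map_sum, Finset.sum_mul_sum]
    simp_rw [hsum]
    rw [integral_finset_sum _ (fun i _ => integrable_finset_sum _ (fun j _ => hintterm i j))]
    have : ∀ i : Fin n, (∫ w : Fin n → U, ∑ j, d (w i) * conj (d (w j)))
        = ∑ j, ∫ w : Fin n → U, d (w i) * conj (d (w j)) := fun i =>
      integral_finset_sum _ (fun j _ => hintterm i j)
    simp_rw [this, cross_term d hd hdb hd0 n, Finset.sum_ite_eq]
    simp [Finset.sum_const, Finset.card_univ, nsmul_eq_mul]
  have hintsum : Integrable (fun w : Fin n → U => (∑ i, d (w i)) * conj (∑ j, d (w j)))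
      volume := by
    have : (fun w : Fin n → U => (∑ i, d (w i)) * conj (∑ j, d (w j)))
        = fun w => ∑ i, ∑ j, d (w i) * conj (d (w j)) := by
      funext w; rw [map_sum, Finset.sum_mul_sum]
    rw [this]
    exact integrable_finset_sum _ fun i _ => integrable_finset_sum _ fun j _ => hintterm i j
  have hre : (∫ w : Fin n → U, ‖∑ i, d (w i)‖ ^ 2)
      = (∫ w : Fin n → U, (∑ i, d (w i)) * conj (∑ j, d (w j))).re := by
    have h1 : (fun w : Fin n → U => ‖∑ i, d (w i)‖ ^ 2)
        = fun w => Complex.reCLM ((∑ i, d (w i)) * conj (∑ j, d (w j))) := by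
      funext w
      simp only [Complex.reCLM_apply]
      exact (hz _).symm
    rw [h1, ContinuousLinearMap.integral_comp_comm _ hintsum, Complex.reCLM_apply]
  rw [hre, expand]
  have hdd : (∫ u, d u * conj (d u)) = ((∫ u, ‖d u‖ ^ 2 : ℝ) : ℂ) := by
    have h2 : (fun u => d u * conj (d u)) = fun u => ((‖d u‖ ^ 2 : ℝ) : ℂ) := by
      funext u
      rw [Complex.mul_conj]
      simp [Complex.normSq_eq_norm_sq, ← Complex.ofReal_pow]
    rw [h2]
    exact integral_ofReal
  rw [hdd]
  simp
end sampling

section sampling2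
variable {U : Type*} [MeasureSpace U] [IsProbabilityMeasure (volume : Measure U)]

lemma sample_approx {X : Type*} [MeasurableSpace X] (μ : Measure X) [IsProbabilityMeasure μ]
    (c : U → X → ℂ) (hc : Measurable (Function.uncurry c)) (hbd : ∀ u x, ‖c u x‖ ≤ 1)
    (n : ℕ) (hn : 0 < n) :
    ∃ w : Fin n → U,
      (∫ x, ‖(∫ u, c u x) - (1 / n : ℂ) * ∑ i, c (w i) x‖ ^ 2 ∂μ) ≤ 4 / n := by
  have hnR : (0:ℝ) < n := by exact_mod_cast hn
  set P : X → ℂ := fun x => ∫ u, c u x with hPdef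
  have hPm : Measurable P := by
    have h : StronglyMeasurable fun p : X × U => c p.2 p.1 :=
      (hc.comp measurable_swap).stronglyMeasurable
    exact h.integral_prod_right'.measurable
  have hPb : ∀ x, ‖P x‖ ≤ 1 := fun x => by
    have := norm_integral_le_of_norm_le_const (μ := (volume : Measure U)) (C := 1)
      (f := fun u => c u x) (Filter.Eventually.of_forall fun u => hbd u x)
    simpa using this
  have hci : ∀ i : Fin n, Measurable fun p : (Fin n → U) × X => c (p.1 i) p.2 := by
    intro i
    have hpair : Measurable fun p : (Fin n → U) × X => ((p.1 i, p.2) : U × X) :=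
      ((measurable_pi_apply i).comp measurable_fst).prodMk measurable_snd
    exact hc.comp hpair
  set g : (Fin n → U) × X → ℝ := fun p => ‖P p.2 - (1 / n : ℂ) * ∑ i, c (p.1 i) p.2‖ ^ 2
    with hgdef
  have hgm : Measurable g :=
    (((hPm.comp measurable_snd).sub
      (measurable_const.mul (Finset.measurable_sum _ fun i _ => hci i))).norm).pow
        measurable_const
  have hsumb : ∀ (q : Fin n → U) (x : X), ‖(1 / n : ℂ) * ∑ i, c (q i) x‖ ≤ 1 := by
    intro q x
    rw [norm_mul]
    have h1 : ‖(1 / n : ℂ)‖ = 1 / n := by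
      rw [norm_div, norm_one]
      simp
    have h2 : ‖∑ i, c (q i) x‖ ≤ n := by
      refine (norm_sum_le _ _).trans ?_
      have h6 : (∑ i : Fin n, ‖c (q i) x‖) ≤ ∑ _i : Fin n, (1:ℝ) :=
        Finset.sum_le_sum fun i _ => hbd _ _
      simpa using h6
    rw [h1]
    have h3 : 1 / (n:ℝ) * ‖∑ i, c (q i) x‖ ≤ 1 / n * n :=
      mul_le_mul_of_nonneg_left h2 (by positivity)
    have h4 : 1 / (n:ℝ) * n = 1 := by field_simp
    linarith
  have hgb : ∀ p, g p ≤ 4 := by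
    intro p
    have : ‖P p.2 - (1 / n : ℂ) * ∑ i, c (p.1 i) p.2‖ ≤ 2 :=
      (norm_sub_le _ _).trans (by linarith [hPb p.2, hsumb p.1 p.2])
    have h5 : g p ≤ 2 ^ 2 := by
      rw [hgdef]
      exact pow_le_pow_left₀ (norm_nonneg _) this 2
    linarith
  have hgnn : ∀ p, 0 ≤ g p := fun p => by rw [hgdef]; positivity
  have hgint : Integrable g ((volume : Measure (Fin n → U)).prod μ) :=
    integrable_of_bound _ hgm.aestronglyMeasurable 4 fun p => by
      rw [Real.norm_eq_abs, abs_of_nonneg (hgnn p)]; exact hgb p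
  -- pointwise (in x) variance bound
  have key : ∀ x : X, (∫ w : Fin n → U, g (w, x)) ≤ 4 / n := by
    intro x
    set d : U → ℂ := fun u => c u x - P x with hddef
    have hdm : Measurable d :=
      (hc.comp (measurable_id.prodMk measurable_const)).sub measurable_const
    have hdb : ∀ u, ‖d u‖ ≤ 2 := fun u =>
      (norm_sub_le _ _).trans (by linarith [hbd u x, hPb x])
    have hcxint : Integrable (fun u => c u x) volume :=
      integrable_of_bound _ (hc.comp (measurable_id.prodMk measurable_const)).aestronglyMeasurable
        1 fun u => hbd u x
    have hd0 : (∫ u, d u) = 0 := by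
      rw [hddef]
      rw [integral_sub hcxint (integrable_const _)]
      simp [hPdef]
    have hnc : (n : ℂ) ≠ 0 := Nat.cast_ne_zero.mpr hn.ne'
    have heq : ∀ w : Fin n → U, g (w, x) = (1 / (n:ℝ)) ^ 2 * ‖∑ i, d (w i)‖ ^ 2 := by
      intro w
      have hrw : P x - (1 / n : ℂ) * ∑ i, c (w i) x = -((1 / n : ℂ) * ∑ i, d (w i)) := by
        rw [hddef]
        rw [Finset.sum_sub_distrib]
        rw [Finset.sum_const, Finset.card_univ, Fintype.card_fin, nsmul_eq_mul]
        field_simp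
        ring
      rw [hgdef]
      show ‖P x - (1 / n : ℂ) * ∑ i, c (w i) x‖ ^ 2 = (1 / (n:ℝ)) ^ 2 * ‖∑ i, d (w i)‖ ^ 2
      rw [hrw, norm_neg, norm_mul, mul_pow]
      congr 2
      rw [norm_div, norm_one]
      simp
    have hV4 : (∫ u, ‖d u‖ ^ 2) ≤ 4 := by
      have h1 : ‖∫ u, ‖d u‖ ^ 2‖ ≤ 4 := by
        have := norm_integral_le_of_norm_le_const (μ := (volume : Measure U)) (C := 4)
          (f := fun u => ‖d u‖ ^ 2) (Filter.Eventually.of_forall fun u => by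
            rw [Real.norm_eq_abs, abs_of_nonneg (by positivity)]
            have h9 : ‖d u‖ ^ 2 ≤ 2 ^ 2 := pow_le_pow_left₀ (norm_nonneg _) (hdb u) 2
            show ‖d u‖ ^ 2 ≤ 4
            linarith)
        simpa using this
      exact (le_abs_self _).trans (le_of_eq_of_le (Real.norm_eq_abs _).symm h1 |> fun h => h)
    calc (∫ w : Fin n → U, g (w, x))
        = ∫ w : Fin n → U, (1 / (n:ℝ)) ^ 2 * ‖∑ i, d (w i)‖ ^ 2 :=
          integral_congr_ae (Filter.Eventually.of_forall heq)
      _ = (1 / (n:ℝ)) ^ 2 * ∫ w : Fin n → U, ‖∑ i, d (w i)‖ ^ 2 := integral_const_mul _ _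
      _ = (1 / (n:ℝ)) ^ 2 * (n * ∫ u, ‖d u‖ ^ 2) := by
          rw [variance_bound d hdm hdb hd0 n]
      _ ≤ (1 / (n:ℝ)) ^ 2 * (n * 4) := by
          refine mul_le_mul_of_nonneg_left ?_ (by positivity)
          exact mul_le_mul_of_nonneg_left hV4 (by positivity)
      _ = 4 / n := by field_simp
  -- average over w
  set Φ : (Fin n → U) → ℝ := fun w => ∫ x, g (w, x) ∂μ with hΦdef
  have hΦm : StronglyMeasurable Φ := hgm.stronglyMeasurable.integral_prod_right'
  have hΦint : Integrable Φ volume :=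
    integrable_of_bound _ hΦm.aestronglyMeasurable 4 fun w => by
      have := norm_integral_le_of_norm_le_const (μ := μ) (C := 4)
        (f := fun x => g (w, x)) (Filter.Eventually.of_forall fun x => by
          rw [Real.norm_eq_abs, abs_of_nonneg (hgnn _)]; exact hgb _)
      simpa using this
  have havg : (∫ w, Φ w) ≤ 4 / n := by
    have hswap : (∫ w, Φ w) = ∫ x, (∫ w : Fin n → U, g (w, x)) ∂μ := by
      rw [hΦdef]
      exact integral_integral_swap hgint
    rw [hswap]
    have h1 : ‖∫ x, (∫ w : Fin n → U, g (w, x)) ∂μ‖ ≤ 4 / n := by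
      have := norm_integral_le_of_norm_le_const (μ := μ) (C := 4 / n)
        (f := fun x => ∫ w : Fin n → U, g (w, x))
        (Filter.Eventually.of_forall fun x => by
          rw [Real.norm_eq_abs, abs_of_nonneg (integral_nonneg fun w => hgnn _)]
          exact key x)
      simpa using this
    exact (le_abs_self _).trans h1
  obtain ⟨w, hw⟩ := MeasureTheory.exists_le_integral hΦint
  exact ⟨w, hw.trans havg⟩

end sampling2

lemma eLpNorm_two_le_of_integral_sq {X : Type*} [MeasurableSpace X] (μ : Measure X)
    [IsFiniteMeasure μ] {f : X → ℂ} (hm : Measurable f) (C : ℝ) (hC : ∀ x, ‖f x‖ ≤ C)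
    {ε : ℝ} (hε : 0 ≤ ε) (h : (∫ x, ‖f x‖ ^ 2 ∂μ) ≤ ε ^ 2) :
    eLpNorm f 2 μ ≤ ENNReal.ofReal ε := by
  have hint : Integrable (fun x => ‖f x‖ ^ 2) μ := by
    refine integrable_of_bound _ (hm.norm.pow measurable_const).aestronglyMeasurable (C ^ 2)
      fun x => ?_
    rw [Real.norm_eq_abs, abs_of_nonneg (by positivity)]
    exact pow_le_pow_left₀ (norm_nonneg _) (hC x) 2
  rw [eLpNorm_eq_lintegral_rpow_enorm_toReal two_ne_zero ENNReal.ofNat_ne_top]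
  have h2 : (2 : ℝ≥0∞).toReal = 2 := by simp
  rw [h2]
  have hlin : (∫⁻ x, (‖f x‖₊ : ℝ≥0∞) ^ (2:ℝ) ∂μ) ≤ ENNReal.ofReal (ε ^ 2) := by
    have hptw : ∀ x, (‖f x‖₊ : ℝ≥0∞) ^ (2:ℝ) = ENNReal.ofReal (‖f x‖ ^ 2) := by
      intro x
      rw [← enorm_eq_nnnorm, ← ofReal_norm, ← Real.rpow_natCast ‖f x‖ 2,
        ← ENNReal.ofReal_rpow_of_nonneg (norm_nonneg _) (by positivity)]
      norm_num
    simp_rw [hptw]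
    rw [← ofReal_integral_eq_lintegral_ofReal hint
      (Filter.Eventually.of_forall fun x => by positivity)]
    exact ENNReal.ofReal_le_ofReal h
  calc (∫⁻ x, (‖f x‖₊ : ℝ≥0∞) ^ (2:ℝ) ∂μ) ^ (1/(2:ℝ))
      ≤ (ENNReal.ofReal (ε ^ 2)) ^ (1/(2:ℝ)) := ENNReal.rpow_le_rpow hlin (by norm_num)
    _ = ENNReal.ofReal ε := by
        rw [ENNReal.ofReal_rpow_of_nonneg (by positivity) (by norm_num)]
        congr 1
        rw [← Real.rpow_natCast ε 2, ← Real.rpow_mul hε]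
        norm_num

lemma norm_avg_le (n : ℕ) (f : Fin n → ℂ) (hf : ∀ i, ‖f i‖ ≤ 1) :
    ‖(1 / n : ℂ) * ∑ i, f i‖ ≤ 1 := by
  rcases Nat.eq_zero_or_pos n with h0 | hpos
  · subst h0; simp
  rw [norm_mul]
  have h1 : ‖(1 / n : ℂ)‖ = 1 / n := by rw [norm_div, norm_one]; simp
  have h2 : ‖∑ i, f i‖ ≤ n := by
    refine (norm_sum_le _ _).trans ?_
    have h6 : (∑ i : Fin n, ‖f i‖) ≤ ∑ _i : Fin n, (1:ℝ) := Finset.sum_le_sum fun i _ => hf i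
    simpa using h6
  have hnR : (0:ℝ) < n := by exact_mod_cast hpos
  rw [h1]
  have h3 : 1 / (n:ℝ) * ‖∑ i, f i‖ ≤ 1 / n * n :=
    mul_le_mul_of_nonneg_left h2 (by positivity)
  have h4 : 1 / (n:ℝ) * n = 1 := by field_simp
  linarith

set_option maxHeartbeats 1000000 in
/-- Product of convolutions: the pointwise product `[F]·[G]` of two corner
convolutions of systems of functions bounded by `1` is approximable in `L²` with error `ε`
by an average of at most `(1 + 64/ε²)²` corner convolutions of systems bounded by `1`. -/
theorem product_of_convolutions
    {A : Type*} [AddCommGroup A] [TopologicalSpace A] [IsTopologicalAddGroup A]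
    [CompactSpace A] [T2Space A] [SecondCountableTopology A]
    [MeasurableSpace A] [BorelSpace A]
    (μ : Measure A) [μ.IsAddHaarMeasure] [IsProbabilityMeasure μ]
    (k : ℕ) (hk : 1 ≤ k) (ε : ℝ) (hε : 0 < ε)
    (F G : (Fin k → Bool) → A → ℂ)
    (hFmeas : ∀ v, Measurable (F v)) (hFbd : ∀ v x, ‖F v x‖ ≤ 1)
    (hGmeas : ∀ v, Measurable (G v)) (hGbd : ∀ v x, ‖G v x‖ ≤ 1) :
    ∃ n : ℕ, 0 < n ∧ (n : ℝ) ≤ (1 + 64 / ε ^ 2) ^ 2 ∧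
      ∃ H : Fin n → (Fin k → Bool) → A → ℂ,
        (∀ i v, Measurable (H i v)) ∧ (∀ i v x, ‖H i v x‖ ≤ 1) ∧
        eLpNorm
          (fun x => cornerConv μ k F x * cornerConv μ k G x -
            (1 / n : ℂ) * ∑ i, cornerConv μ k (H i) x) 2 μ
          ≤ ENNReal.ofReal ε := by
  classical
  obtain ⟨n, hn, hnle, hva⟩ :
      ∃ n : ℕ, 0 < n ∧ (n : ℝ) ≤ (1 + 64 / ε ^ 2) ^ 2 ∧ 4 / (n:ℝ) ≤ ε ^ 2 := by
    have hn4 : (0:ℝ) < 4 / ε ^ 2 := by positivity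
    refine ⟨⌈(4:ℝ) / ε ^ 2⌉₊, Nat.ceil_pos.mpr hn4, ?_, ?_⟩
    · have h1 : (⌈(4:ℝ) / ε ^ 2⌉₊ : ℝ) < 4 / ε ^ 2 + 1 := Nat.ceil_lt_add_one (le_of_lt hn4)
      have ha : (0:ℝ) < 1 / ε ^ 2 := by positivity
      have e1 : (4:ℝ) / ε ^ 2 = 4 * (1 / ε ^ 2) := by ring
      have e2 : (64:ℝ) / ε ^ 2 = 64 * (1 / ε ^ 2) := by ring
      nlinarith [sq_nonneg ((64:ℝ) / ε ^ 2), ha, h1, e1, e2]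
    · have h1 : 4 / ε ^ 2 ≤ (⌈(4:ℝ) / ε ^ 2⌉₊ : ℝ) := Nat.le_ceil _
      have hnR : (0:ℝ) < (⌈(4:ℝ) / ε ^ 2⌉₊ : ℝ) := lt_of_lt_of_le hn4 h1
      rw [div_le_iff₀ hnR]
      rw [div_le_iff₀ (by positivity : (0:ℝ) < ε ^ 2)] at h1
      nlinarith
  letI : MeasureSpace (Fin k → A) := ⟨Measure.pi fun _ => μ⟩
  haveI hprob : IsProbabilityMeasure (volume : Measure (Fin k → A)) := by
    show IsProbabilityMeasure (Measure.pi fun _ : Fin k => μ)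
    infer_instance
  set c : (Fin k → A) → A → ℂ := fun u x => cornerConv μ k (shiftSys F G u) x with hcdef
  have hSbd : ∀ u v y, ‖shiftSys F G u v y‖ ≤ 1 := by
    intro u v y
    have h := mul_le_mul (hFbd v y) (hGbd v (y + ∑ i, if v i then u i else 0))
      (norm_nonneg _) zero_le_one
    have hh : ‖shiftSys F G u v y‖
        = ‖F v y‖ * ‖G v (y + ∑ i, if v i then u i else 0)‖ := norm_mul _ _
    rw [hh]
    linarith
  have hSm : ∀ u v, Measurable (shiftSys F G u v) := by
    intro u v
    exact (hFmeas v).mul ((hGmeas v).comp (measurable_add_const _))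
  have hbd : ∀ u x, ‖c u x‖ ≤ 1 := fun u x => norm_cornerConv_le μ _ (hSbd u) x
  have hc : Measurable (Function.uncurry c) := by
    have hsm : StronglyMeasurable fun q : ((Fin k → A) × A) × (Fin k → A) =>
        ∏ v ∈ Finset.univ.filter (fun v : Fin k → Bool => v ≠ fun _ => false),
          cstar (ht v) (shiftSys F G q.1.1 v (vertexPoint q.1.2 q.2 v)) := by
      refine (Finset.measurable_prod _ fun v _ => ?_).stronglyMeasurable
      have m1 : Measurable fun q : ((Fin k → A) × A) × (Fin k → A) =>
          vertexPoint q.1.2 q.2 v :=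
        measurable_vertexPoint_comp (measurable_snd.comp measurable_fst) measurable_snd v
      have m2 : Measurable fun q : ((Fin k → A) × A) × (Fin k → A) =>
          ∑ i, if v i then q.1.1 i else 0 :=
        (measurable_sumIf v).comp (measurable_fst.comp measurable_fst)
      exact (measurable_cstar _).comp
        (((hFmeas v).comp m1).mul ((hGmeas v).comp (m1.add m2)))
    have h := MeasureTheory.StronglyMeasurable.integral_prod_right'
      (ν := Measure.pi fun _ : Fin k => μ) hsm
    exact h.measurable
  obtain ⟨w, hw⟩ := sample_approx μ c hc hbd n hn
  refine ⟨n, hn, hnle, fun i => shiftSys F G (w i),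
    fun i v => hSm (w i) v, fun i v x => hSbd (w i) v x, ?_⟩
  have hPeq : ∀ x : A, cornerConv μ k F x * cornerConv μ k G x = ∫ u, c u x :=
    fun x => cornerConv_mul_eq μ F G hFmeas hFbd hGmeas hGbd x
  have hfeq : (fun x => cornerConv μ k F x * cornerConv μ k G x -
      (1 / n : ℂ) * ∑ i, cornerConv μ k (shiftSys F G (w i)) x)
      = fun x => (∫ u, c u x) - (1 / n : ℂ) * ∑ i, c (w i) x := by
    funext x
    rw [hPeq x]
  rw [hfeq]
  have hPm : Measurable fun x : A => ∫ u, c u x := by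
    have h : StronglyMeasurable fun p : A × (Fin k → A) => c p.2 p.1 :=
      (hc.comp measurable_swap).stronglyMeasurable
    exact h.integral_prod_right'.measurable
  have hcwm : ∀ i : Fin n, Measurable (c (w i)) := fun i =>
    measurable_cornerConv μ (shiftSys F G (w i)) (hSm (w i))
  have hm : Measurable fun x : A => (∫ u, c u x) - (1 / n : ℂ) * ∑ i, c (w i) x :=
    hPm.sub (measurable_const.mul (Finset.measurable_sum _ fun i _ => hcwm i))
  have hPb : ∀ x : A, ‖∫ u, c u x‖ ≤ 1 := fun x => by
    have := norm_integral_le_of_norm_le_const (μ := (volume : Measure (Fin k → A))) (C := 1)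
      (f := fun u => c u x) (Filter.Eventually.of_forall fun u => hbd u x)
    simpa using this
  refine eLpNorm_two_le_of_integral_sq μ hm 2 (fun x => ?_) hε.le (hw.trans hva)
  refine (norm_sub_le _ _).trans ?_
  have h2 := norm_avg_le n (fun i => c (w i) x) (fun i => hbd (w i) x)
  linarith [hPb x]
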